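/- Fix a power of two n ≥ 2, a positive integer d, N = n^d, and an integer k with 1 ≤ k ≤ N. Let S be a Bernoulli set with rate k/N in (ZMod n)^d, and let B = (B_1,…,B_d) be a vector of powers of two with B_q dividing n for each q. Then the expected cardinality of S^(B) satisfies E[|S^(B)|] ≤ k²/|B|. -/

import Mathlib

open scoped BigOperators ENNReal
open MeasureTheory

private lemma stmt12_aux (b c K : ℝ≥0∞) (hb0 : b ≠ 0) (hbt : b ≠ ⊤)
    (hc0 : c ≠ 0) (hct : c ≠ ⊤) :
    (b * c * c) * (K / (b * c) * (K / (b * c))) = K * K / b := by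
  rw [div_eq_mul_inv, div_eq_mul_inv, ENNReal.mul_inv (Or.inl hb0) (Or.inr hc0)]
  have h1 : c * c⁻¹ = 1 := ENNReal.mul_inv_cancel hc0 hct
  have h2 : b * b⁻¹ = 1 := ENNReal.mul_inv_cancel hb0 hbt
  have : b * c * c * (K * (b⁻¹ * c⁻¹) * (K * (b⁻¹ * c⁻¹)))
      = (K * K * b⁻¹) * ((b * b⁻¹) * ((c * c⁻¹) * (c * c⁻¹))) := by ring
  rw [this, h1, h2]; ring

theorem stmt12 (m : ℕ) (hm : 1 ≤ m) (n : ℕ) (hn : n = 2 ^ m) [NeZero n]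
    (d : ℕ) (hd : 1 ≤ d) (k : ℕ) (hk1 : 1 ≤ k) (hkN : k ≤ n ^ d)
    (B : Fin d → ℕ) (hB2 : ∀ q, ∃ e : ℕ, B q = 2 ^ e) (hB : ∀ q, B q ∣ n)
    (μ : Measure ((Fin d → ZMod n) → Bool))
    (hμ : μ = Measure.pi fun _ : Fin d → ZMod n =>
      (1 - (k : ℝ≥0∞) / ((n : ℝ≥0∞) ^ d)) • Measure.dirac false +
        ((k : ℝ≥0∞) / ((n : ℝ≥0∞) ^ d)) • Measure.dirac true) :
    ∫⁻ ω, (({f : ∀ q, ZMod (B q) |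
        ∃ g h : Fin d → ZMod n, g ≠ h ∧ ω g = true ∧ ω h = true ∧
          (∀ q, ZMod.castHom (hB q) (ZMod (B q)) (g q) = f q) ∧
          (∀ q, ZMod.castHom (hB q) (ZMod (B q)) (h q) = f q)}.ncard : ℝ≥0∞)) ∂μ
      ≤ (k : ℝ≥0∞) ^ 2 / ∏ q, ((B q : ℕ) : ℝ≥0∞) := by
  classical
  have hn0 : n ≠ 0 := NeZero.ne n
  haveI hBnz : ∀ q, NeZero (B q) := fun q =>
    ⟨fun h => hn0 (Nat.eq_zero_of_zero_dvd (h ▸ hB q))⟩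
  set p : ℝ≥0∞ := (k : ℝ≥0∞) / ((n : ℝ≥0∞) ^ d) with hp
  have hNcast : ((n : ℝ≥0∞) ^ d) = ((n ^ d : ℕ) : ℝ≥0∞) := by push_cast; ring
  have hp1 : p ≤ 1 := by
    refine ENNReal.div_le_of_le_mul ?_
    rw [one_mul, hNcast]
    exact_mod_cast hkN
  -- the additive hom of reductions
  set π : (Fin d → ZMod n) →+ (∀ q, ZMod (B q)) :=
    { toFun := fun g q => ZMod.castHom (hB q) (ZMod (B q)) (g q)
      map_zero' := funext fun q => map_zero (ZMod.castHom (hB q) (ZMod (B q)))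
      map_add' := fun a b => funext fun q =>
        map_add (ZMod.castHom (hB q) (ZMod (B q))) (a q) (b q) } with hπ
  have hπsurj : Function.Surjective π := by
    intro f
    refine ⟨fun q => ((f q).val : ZMod n), funext fun q => ?_⟩
    show ZMod.castHom (hB q) (ZMod (B q)) (((f q).val : ℕ) : ZMod n) = f q
    rw [map_natCast]
    exact ZMod.natCast_rightInverse (f q)
  -- cardinalities
  have cardF : Nat.card (∀ q, ZMod (B q)) = ∏ q, B q := by
    rw [Nat.card_pi]; simp [Nat.card_zmod]
  have cardG : Nat.card (Fin d → ZMod n) = n ^ d := by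
    rw [Nat.card_pi]; simp [Nat.card_zmod]
  set cK : ℕ := Nat.card π.ker with hcK
  have hGK : n ^ d = (∏ q, B q) * cK := by
    rw [← cardF, ← cardG, AddSubgroup.card_eq_card_quotient_mul_card_addSubgroup π.ker]
    congr 1
    exact Nat.card_congr (QuotientAddGroup.quotientKerEquivOfSurjective π hπsurj).toEquiv
  -- the pair sets
  set Q : Finset ((Fin d → ZMod n) × (Fin d → ZMod n)) :=
    Finset.univ.filter (fun pr => pr.1 ≠ pr.2 ∧ π pr.1 = π pr.2) with hQ
  set P : Finset ((Fin d → ZMod n) × (Fin d → ZMod n)) :=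
    Finset.univ.filter (fun pr => π pr.1 = π pr.2) with hP
  have hQP : Q ⊆ P := Finset.monotone_filter_right _ (fun pr _ h => h.2)
  have cardP : P.card = n ^ d * cK := by
    have e : {pr : (Fin d → ZMod n) × (Fin d → ZMod n) // π pr.1 = π pr.2}
        ≃ (Fin d → ZMod n) × π.ker :=
      { toFun := fun pr => (pr.1.1, ⟨pr.1.2 - pr.1.1, by
          rw [AddMonoidHom.mem_ker, map_sub, pr.2, sub_self]⟩)
        invFun := fun gz => ⟨(gz.1, gz.1 + gz.2.1), by
          have hz : π gz.2.1 = 0 := AddMonoidHom.mem_ker.1 gz.2.2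
          show π gz.1 = π (gz.1 + gz.2.1)
          rw [map_add, hz, add_zero]⟩
        left_inv := fun pr => by
          apply Subtype.ext
          exact Prod.ext rfl (by simp)
        right_inv := fun gz => by
          dsimp only
          exact Prod.ext rfl (Subtype.ext (by simp)) }
    have h1 : P.card = Nat.card {pr : (Fin d → ZMod n) × (Fin d → ZMod n) // π pr.1 = π pr.2} := by
      rw [Nat.card_eq_fintype_card, Fintype.card_subtype]
    rw [h1, Nat.card_congr e, Nat.card_prod, cardG]
  -- the Bernoulli factor measure
  set ν : Measure Bool :=
    (1 - p) • Measure.dirac false + p • Measure.dirac true with hν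
  have hνtrue : ν {true} = p := by
    simp [hν, Measure.dirac_apply]
  have hνuniv : ν Set.univ = 1 := by
    simp only [hν, Measure.coe_add, Pi.add_apply, Measure.smul_apply, smul_eq_mul,
      Measure.dirac_apply, Set.indicator_univ, Pi.one_apply, mul_one]
    exact tsub_add_cancel_of_le hp1
  haveI : IsProbabilityMeasure ν := ⟨hνuniv⟩
  -- measure of two-point cylinder
  have hcyl : ∀ g h : Fin d → ZMod n, g ≠ h →
      (Measure.pi fun _ : Fin d → ZMod n => ν) {ω | ω g = true ∧ ω h = true} = p * p := by
    intro g h hgh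
    have hset : {ω : (Fin d → ZMod n) → Bool | ω g = true ∧ ω h = true}
        = Set.univ.pi (fun i => if i ∈ ({g, h} : Finset (Fin d → ZMod n)) then {true} else Set.univ) := by
      ext ω
      simp only [Set.mem_setOf_eq, Set.mem_pi, Set.mem_univ, forall_true_left]
      constructor
      · rintro ⟨h1, h2⟩ i
        by_cases hi : i ∈ ({g, h} : Finset (Fin d → ZMod n))
        · simp only [hi, if_true, Set.mem_singleton_iff]
          rcases Finset.mem_insert.1 hi with rfl | hi'
          · exact h1
          · rw [Finset.mem_singleton.1 hi']; exact h2
        · simp [hi]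
      · intro hall
        have h1 := hall g
        have h2 := hall h
        simp [Finset.mem_insert] at h1 h2
        exact ⟨h1, h2⟩
    rw [hset, Measure.pi_pi]
    have : ∀ i : Fin d → ZMod n,
        ν (if i ∈ ({g, h} : Finset (Fin d → ZMod n)) then ({true} : Set Bool) else Set.univ)
        = if i ∈ ({g, h} : Finset (Fin d → ZMod n)) then p else 1 := by
      intro i
      by_cases hi : i ∈ ({g, h} : Finset (Fin d → ZMod n))
      · rw [if_pos hi, if_pos hi]; exact hνtrue
      · rw [if_neg hi, if_neg hi]; exact hνuniv
    rw [Finset.prod_congr rfl (fun i _ => this i), Finset.prod_ite_mem,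
      Finset.univ_inter, Finset.prod_const, Finset.card_pair hgh, sq]
  -- pointwise bound
  have hpt : ∀ ω : (Fin d → ZMod n) → Bool,
      ({f : ∀ q, ZMod (B q) |
        ∃ g h : Fin d → ZMod n, g ≠ h ∧ ω g = true ∧ ω h = true ∧
          (∀ q, ZMod.castHom (hB q) (ZMod (B q)) (g q) = f q) ∧
          (∀ q, ZMod.castHom (hB q) (ZMod (B q)) (h q) = f q)}.ncard : ℝ≥0∞)
      ≤ ∑ pr ∈ Q, (if ω pr.1 = true ∧ ω pr.2 = true then (1 : ℝ≥0∞) else 0) := by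
    intro ω
    set R : Finset (∀ q, ZMod (B q)) :=
      (Q.filter (fun pr => ω pr.1 = true ∧ ω pr.2 = true)).image (fun pr => π pr.1) with hR
    have hsub : {f : ∀ q, ZMod (B q) |
        ∃ g h : Fin d → ZMod n, g ≠ h ∧ ω g = true ∧ ω h = true ∧
          (∀ q, ZMod.castHom (hB q) (ZMod (B q)) (g q) = f q) ∧
          (∀ q, ZMod.castHom (hB q) (ZMod (B q)) (h q) = f q)} ⊆ ↑R := by
      rintro f ⟨g, h, hgh, hg, hh, hgf, hhf⟩
      have hgf' : π g = f := funext hgf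
      have hhf' : π h = f := funext hhf
      refine Finset.mem_coe.2 (Finset.mem_image.2 ⟨(g, h), ?_, hgf'⟩)
      refine Finset.mem_filter.2 ⟨?_, hg, hh⟩
      exact Finset.mem_filter.2 ⟨Finset.mem_univ _, hgh, hgf'.trans hhf'.symm⟩
    have h1 : ({f : ∀ q, ZMod (B q) |
        ∃ g h : Fin d → ZMod n, g ≠ h ∧ ω g = true ∧ ω h = true ∧
          (∀ q, ZMod.castHom (hB q) (ZMod (B q)) (g q) = f q) ∧
          (∀ q, ZMod.castHom (hB q) (ZMod (B q)) (h q) = f q)}.ncard : ℕ)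
        ≤ (Q.filter (fun pr => ω pr.1 = true ∧ ω pr.2 = true)).card := by
      calc _ ≤ (↑R : Set (∀ q, ZMod (B q))).ncard := Set.ncard_le_ncard hsub (R.finite_toSet)
        _ = R.card := Set.ncard_coe_finset R
        _ ≤ _ := Finset.card_image_le
    calc ((Set.ncard _ : ℕ) : ℝ≥0∞) ≤ ((Q.filter (fun pr => ω pr.1 = true ∧ ω pr.2 = true)).card : ℝ≥0∞) := by
          exact_mod_cast h1
      _ = _ := by
          rw [Finset.card_filter, Nat.cast_sum]
          exact Finset.sum_congr rfl (fun pr _ => by split <;> simp)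
  -- main computation
  subst hμ
  calc ∫⁻ ω, (({f : ∀ q, ZMod (B q) |
        ∃ g h : Fin d → ZMod n, g ≠ h ∧ ω g = true ∧ ω h = true ∧
          (∀ q, ZMod.castHom (hB q) (ZMod (B q)) (g q) = f q) ∧
          (∀ q, ZMod.castHom (hB q) (ZMod (B q)) (h q) = f q)}.ncard : ℝ≥0∞))
        ∂(Measure.pi fun _ : Fin d → ZMod n => ν)
      ≤ ∫⁻ ω, ∑ pr ∈ Q, (if ω pr.1 = true ∧ ω pr.2 = true then (1 : ℝ≥0∞) else 0)
        ∂(Measure.pi fun _ : Fin d → ZMod n => ν) := lintegral_mono hpt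
    _ = ∑ pr ∈ Q, ∫⁻ ω, (if ω pr.1 = true ∧ ω pr.2 = true then (1 : ℝ≥0∞) else 0)
        ∂(Measure.pi fun _ : Fin d → ZMod n => ν) :=
        lintegral_finset_sum _ (fun pr _ => measurable_of_countable _)
    _ = ∑ pr ∈ Q, p * p := by
        refine Finset.sum_congr rfl (fun pr hpr => ?_)
        have hne : pr.1 ≠ pr.2 := (Finset.mem_filter.1 hpr).2.1
        have : (fun ω : (Fin d → ZMod n) → Bool =>
            (if ω pr.1 = true ∧ ω pr.2 = true then (1 : ℝ≥0∞) else 0))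
            = fun ω => ({ω : (Fin d → ZMod n) → Bool | ω pr.1 = true ∧ ω pr.2 = true}).indicator 1 ω := by
          funext ω; simp [Set.indicator_apply]
        rw [this, lintegral_indicator_one (Set.toFinite _).measurableSet, hcyl _ _ hne]
    _ = (Q.card : ℝ≥0∞) * (p * p) := by
        rw [Finset.sum_const, nsmul_eq_mul]
    _ ≤ (P.card : ℝ≥0∞) * (p * p) := by
        gcongr ?_ * ?_
        · exact_mod_cast Finset.card_le_card hQP
        · exact le_rfl
    _ = (k : ℝ≥0∞) ^ 2 / ∏ q, ((B q : ℕ) : ℝ≥0∞) := by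
        have hb0 : ((∏ q, B q : ℕ) : ℝ≥0∞) ≠ 0 := by
          simp only [ne_eq, Nat.cast_eq_zero]
          exact Finset.prod_ne_zero_iff.2 (fun q _ => (hBnz q).ne)
        have hbt : ((∏ q, B q : ℕ) : ℝ≥0∞) ≠ ⊤ := ENNReal.natCast_ne_top _
        have hc0 : ((cK : ℕ) : ℝ≥0∞) ≠ 0 := by
          simp only [ne_eq, Nat.cast_eq_zero, hcK]
          exact Nat.card_ne_zero.2 ⟨⟨0, π.ker.zero_mem⟩, inferInstance⟩
        have hct : ((cK : ℕ) : ℝ≥0∞) ≠ ⊤ := ENNReal.natCast_ne_top _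
        have hpeq : p = (k : ℝ≥0∞) / (((∏ q, B q : ℕ) : ℝ≥0∞) * ((cK : ℕ) : ℝ≥0∞)) := by
          rw [hp, hNcast, hGK, Nat.cast_mul]
        have hprod : (∏ q, ((B q : ℕ) : ℝ≥0∞)) = ((∏ q, B q : ℕ) : ℝ≥0∞) := by
          rw [Nat.cast_prod]
        rw [cardP, hGK, hpeq, hprod, sq, Nat.cast_mul, Nat.cast_mul]
        exact stmt12_aux _ _ _ hb0 hbt hc0 hct
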